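/- The characteristic polynomial of N(λ) (as a polynomial in x) factors as (x − 1)·(x − (1 + (2−√2)λ))·(x − (1 + 2λ))·(x − (1 + (2+√2)λ)), i.e., the eigenvalues of N(λ) are 1, 1 + (2−√2)λ, 1 + 2λ, and 1 + (2+√2)λ. -/
import Mathlib

set_option maxHeartbeats 1600000

open Matrix Polynomial

theorem stmt_2 (lam : ℝ) :
    let N : Matrix (Fin 4) (Fin 4) ℝ :=
      !![1+lam, -lam, 0, 0;
         -lam, 1+2*lam, -lam, 0;
         0, -lam, 1+2*lam, -lam;
         0, 0, -lam, 1+lam]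
    N.charpoly =
      (X - C 1) * (X - C (1 + (2 - Real.sqrt 2) * lam)) *
        (X - C (1 + 2 * lam)) * (X - C (1 + (2 + Real.sqrt 2) * lam)) := by
  intro N
  have hC : (C (Real.sqrt 2) : ℝ[X]) ^ 2 = 2 := by
    rw [← C_pow, Real.sq_sqrt (by norm_num : (0:ℝ) ≤ 2)]; simp [map_ofNat]
  have e1 : (Fin.succ 2 : Fin 4) = 3 := by decide
  have e2 : (Fin.castSucc 2 : Fin 4) = 2 := by decide
  have e3 : Fin.succAbove (1 : Fin 4) 2 = 3 := by decide
  rw [Matrix.charpoly]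
  simp [N, Matrix.det_succ_row_zero, Fin.sum_univ_succ, charmatrix_apply,
    Matrix.one_apply, Fin.succ_ne_zero, e1, e2, e3, Matrix.diagonal_apply]
  ring_nf
  simp only [hC, map_ofNat]
  ring
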